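/- Let G(t,r,ν) = b_m + (R/r)·(b_s − b_m)·F(t,r,ν) with F(t,r,ν) = ½ e^{−√(3k)·(r−R)}·[Erfc(√(3k/(4ct))·(r−R) − √(k c t)) + Erfc(√(3k/(4ct))·(r−R) + √(k c t))], where constants k, c, R > 0 and b_m, b_s ∈ ℝ. Then G satisfies the boundary/initial conditions: (i) for every r > R, G(t,r,ν) → b_m as t → 0⁺; (ii) for every t > 0, G(t,r,ν) → b_m as r → ∞; (iii) G(t,R,ν) = b_s for every t > 0. -/

import Mathlib

open Real Filter

/-- The complementary error function `Erfc(x) = 1 − (2/√π)∫₀ˣ e^{−s²} ds`. -/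
noncomputable def Erfc (x : ℝ) : ℝ :=
  1 - (2 / Real.sqrt π) * ∫ s in (0:ℝ)..x, Real.exp (-s ^ 2)

/-- The self-similar profile `F(t,r)` of the exact diffusion solution. -/
noncomputable def diffusionProfile (k c R t r : ℝ) : ℝ :=
  (1 / 2) * Real.exp (-(Real.sqrt (3 * k)) * (r - R)) *
    (Erfc (Real.sqrt (3 * k / (4 * c * t)) * (r - R) - Real.sqrt (k * c * t)) +
     Erfc (Real.sqrt (3 * k / (4 * c * t)) * (r - R) + Real.sqrt (k * c * t)))

/-- The exact incident radiation `G(t,r) = b_m + (R/r)(b_s − b_m) F(t,r)`. -/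
noncomputable def incidentRadiation (k c R bm bs t r : ℝ) : ℝ :=
  bm + (R / r) * (bs - bm) * diffusionProfile k c R t r

noncomputable def gaussInt (x : ℝ) : ℝ := ∫ s in (0:ℝ)..x, Real.exp (-s ^ 2)

lemma gaussInt_neg (x : ℝ) : gaussInt (-x) = - gaussInt x := by
  have h : (∫ s in (0:ℝ)..x, Real.exp (-(-s) ^ 2)) = ∫ s in (-x)..(-(0:ℝ)), Real.exp (-s ^ 2) :=
    intervalIntegral.integral_comp_neg (fun s => Real.exp (-s ^ 2))
  simp only [neg_sq, neg_zero] at h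
  rw [gaussInt, gaussInt, intervalIntegral.integral_symm, ← h]

lemma integrableOn_gauss : MeasureTheory.IntegrableOn (fun s : ℝ => Real.exp (-s ^ 2))
    (Set.Ioi 0) := by
  have := (integrable_exp_neg_mul_sq (b := 1) one_pos).integrableOn (s := Set.Ioi (0:ℝ))
  simpa using this

lemma gaussInt_le (x : ℝ) : gaussInt x ≤ Real.sqrt π / 2 := by
  rcases le_total x 0 with hx | hx
  · have h1 : gaussInt x ≤ 0 := by
      rw [gaussInt, intervalIntegral.integral_symm]
      simp only [neg_nonpos]
      apply intervalIntegral.integral_nonneg hx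
      intro s _; positivity
    have : (0:ℝ) ≤ Real.sqrt π / 2 := by positivity
    linarith
  · have h1 : gaussInt x = ∫ s in Set.Ioc (0:ℝ) x, Real.exp (-s ^ 2) := by
      rw [gaussInt, intervalIntegral.integral_of_le hx]
    have h2 : (∫ s in Set.Ioc (0:ℝ) x, Real.exp (-s ^ 2)) ≤
        ∫ s in Set.Ioi (0:ℝ), Real.exp (-s ^ 2) := by
      apply MeasureTheory.setIntegral_mono_set integrableOn_gauss
      · filter_upwards with s using by positivity
      · exact HasSubset.Subset.eventuallyLE Set.Ioc_subset_Ioi_self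
    have h3 : (∫ s in Set.Ioi (0:ℝ), Real.exp (-s ^ 2)) = Real.sqrt π / 2 := by
      have := integral_gaussian_Ioi 1
      simpa using this
    rw [h1]; rw [h3] at h2; exact h2

lemma abs_gaussInt_le (x : ℝ) : |gaussInt x| ≤ Real.sqrt π / 2 := by
  rw [abs_le]
  refine ⟨?_, gaussInt_le x⟩
  have := gaussInt_le (-x)
  rw [gaussInt_neg] at this
  linarith

lemma Erfc_nonneg (x : ℝ) : 0 ≤ Erfc x := by
  have h := gaussInt_le x
  have hp : (0:ℝ) < Real.sqrt π := Real.sqrt_pos.mpr Real.pi_pos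
  rw [Erfc, sub_nonneg]
  rw [div_mul_eq_mul_div, div_le_one hp]
  show 2 * gaussInt x ≤ Real.sqrt π
  linarith

lemma Erfc_le_two (x : ℝ) : Erfc x ≤ 2 := by
  have h := gaussInt_le (-x)
  rw [gaussInt_neg] at h
  have hp : (0:ℝ) < Real.sqrt π := Real.sqrt_pos.mpr Real.pi_pos
  rw [Erfc]
  have : -1 ≤ (2 / Real.sqrt π) * gaussInt x := by
    rw [div_mul_eq_mul_div, le_div_iff₀ hp, neg_one_mul]
    show -Real.sqrt π ≤ 2 * gaussInt x
    linarith
  show 1 - (2 / Real.sqrt π) * gaussInt x ≤ 2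
  linarith

lemma Erfc_add_neg (x : ℝ) : Erfc (-x) + Erfc x = 2 := by
  have h := gaussInt_neg x
  show (1 - (2 / Real.sqrt π) * gaussInt (-x)) + (1 - (2 / Real.sqrt π) * gaussInt x) = 2
  rw [h]; ring

lemma Erfc_tendsto_atTop : Tendsto Erfc atTop (nhds 0) := by
  have h1 : Tendsto gaussInt atTop (nhds (Real.sqrt π / 2)) := by
    have h3 : (∫ s in Set.Ioi (0:ℝ), Real.exp (-s ^ 2)) = Real.sqrt π / 2 := by
      simpa using integral_gaussian_Ioi 1
    have := MeasureTheory.intervalIntegral_tendsto_integral_Ioi (0:ℝ)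
      integrableOn_gauss (tendsto_id (α := ℝ) (x := atTop))
    rw [h3] at this
    exact this
  have hp : Real.sqrt π ≠ 0 := ne_of_gt (Real.sqrt_pos.mpr Real.pi_pos)
  have : Tendsto (fun x => 1 - (2 / Real.sqrt π) * gaussInt x) atTop
      (nhds (1 - (2 / Real.sqrt π) * (Real.sqrt π / 2))) :=
    (tendsto_const_nhds.sub (tendsto_const_nhds.mul h1))
  have he : (1 - (2 / Real.sqrt π) * (Real.sqrt π / 2)) = 0 := by
    field_simp
    norm_num
  rw [he] at this
  exact this

lemma sqrt_tendsto_atTop : Tendsto Real.sqrt atTop atTop := by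
  apply tendsto_atTop.mpr
  intro b
  filter_upwards [eventually_ge_atTop (b ^ 2)] with x hx
  calc b ≤ |b| := le_abs_self b
    _ = Real.sqrt (b ^ 2) := (Real.sqrt_sq_eq_abs b).symm
    _ ≤ Real.sqrt x := Real.sqrt_le_sqrt hx

/-- The exact diffusion solution satisfies the initial and boundary conditions:
(i) `G(t,r) → b_m` as `t → 0⁺` for `r > R`; (ii) `G(t,r) → b_m` as `r → ∞` for `t > 0`;
(iii) `G(t,R) = b_s` for `t > 0`. -/
theorem incidentRadiation_initial_boundary_conditions
    (k c R bm bs : ℝ) (hk : 0 < k) (hc : 0 < c) (hR : 0 < R) :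
    (∀ r, R < r →
      Tendsto (fun t => incidentRadiation k c R bm bs t r)
        (nhdsWithin 0 (Set.Ioi 0)) (nhds bm)) ∧
    (∀ t, 0 < t →
      Tendsto (fun r => incidentRadiation k c R bm bs t r) atTop (nhds bm)) ∧
    (∀ t, 0 < t → incidentRadiation k c R bm bs t R = bs) := by
  refine ⟨?_, ?_, ?_⟩
  · -- (i) t → 0⁺
    intro r hr
    have hrR : 0 < r - R := sub_pos.mpr hr
    -- √(3k/(4ct)) (r-R) → ∞
    have h1 : Tendsto (fun t : ℝ => 3 * k / (4 * c * t)) (nhdsWithin 0 (Set.Ioi 0)) atTop := by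
      have hpos : (0:ℝ) < 3 * k / (4 * c) := by positivity
      have h := Tendsto.const_mul_atTop hpos (tendsto_inv_nhdsGT_zero : Tendsto (fun x : ℝ => x⁻¹) _ _)
      refine h.congr fun t => ?_
      rw [← div_eq_mul_inv, div_div]
    have h2 : Tendsto (fun t : ℝ => Real.sqrt (3 * k / (4 * c * t)) * (r - R))
        (nhdsWithin 0 (Set.Ioi 0)) atTop :=
      ((sqrt_tendsto_atTop.comp h1).atTop_mul_const hrR)
    have h3 : Tendsto (fun t : ℝ => Real.sqrt (k * c * t)) (nhdsWithin 0 (Set.Ioi 0))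
        (nhds 0) := by
      have hc1 : Tendsto (fun t : ℝ => k * c * t) (nhdsWithin 0 (Set.Ioi 0)) (nhds 0) := by
        have hcont : Continuous fun t : ℝ => k * c * t := continuous_const.mul continuous_id
        have := hcont.tendsto (0:ℝ)
        simp only [mul_zero] at this
        exact this.mono_left nhdsWithin_le_nhds
      have := (Real.continuous_sqrt.tendsto 0).comp hc1
      simpa [Function.comp_def] using this
    have hargm : Tendsto (fun t : ℝ => Real.sqrt (3 * k / (4 * c * t)) * (r - R)
        - Real.sqrt (k * c * t)) (nhdsWithin 0 (Set.Ioi 0)) atTop :=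
      (h2.atTop_add (h3.neg)).congr fun t => (sub_eq_add_neg _ _).symm
    have hargp : Tendsto (fun t : ℝ => Real.sqrt (3 * k / (4 * c * t)) * (r - R)
        + Real.sqrt (k * c * t)) (nhdsWithin 0 (Set.Ioi 0)) atTop :=
      h2.atTop_add h3
    have hsum : Tendsto (fun t : ℝ =>
        Erfc (Real.sqrt (3 * k / (4 * c * t)) * (r - R) - Real.sqrt (k * c * t)) +
        Erfc (Real.sqrt (3 * k / (4 * c * t)) * (r - R) + Real.sqrt (k * c * t)))
        (nhdsWithin 0 (Set.Ioi 0)) (nhds 0) := by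
      have := (Erfc_tendsto_atTop.comp hargm).add (Erfc_tendsto_atTop.comp hargp)
      simpa using this
    have : Tendsto (fun t => incidentRadiation k c R bm bs t r)
        (nhdsWithin 0 (Set.Ioi 0)) (nhds (bm + (R / r) * (bs - bm) *
          ((1 / 2) * Real.exp (-(Real.sqrt (3 * k)) * (r - R)) * 0))) := by
      unfold incidentRadiation diffusionProfile
      exact tendsto_const_nhds.add (tendsto_const_nhds.mul
        ((tendsto_const_nhds.mul hsum)))
    simpa using this
  · -- (ii) r → ∞
    intro t ht
    have key : Tendsto (fun r => incidentRadiation k c R bm bs t r - bm) atTop (nhds 0) := by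
      apply squeeze_zero_norm'
        (a := fun r => (|bs - bm| * 2) * Real.exp (-(Real.sqrt (3 * k)) * (r - R)))
      · filter_upwards [eventually_ge_atTop R] with r hrR
        have hr0 : 0 < r := lt_of_lt_of_le hR hrR
        have hRr : R / r ≤ 1 := by
          rw [div_le_one hr0]; exact hrR
        have hRr0 : 0 ≤ R / r := by positivity
        have hE : |Erfc (Real.sqrt (3 * k / (4 * c * t)) * (r - R) - Real.sqrt (k * c * t)) +
            Erfc (Real.sqrt (3 * k / (4 * c * t)) * (r - R) + Real.sqrt (k * c * t))| ≤ 4 := by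
          rw [abs_le]
          constructor
          · have := Erfc_nonneg (Real.sqrt (3 * k / (4 * c * t)) * (r - R) - Real.sqrt (k * c * t))
            have := Erfc_nonneg (Real.sqrt (3 * k / (4 * c * t)) * (r - R) + Real.sqrt (k * c * t))
            linarith
          · have := Erfc_le_two (Real.sqrt (3 * k / (4 * c * t)) * (r - R) - Real.sqrt (k * c * t))
            have := Erfc_le_two (Real.sqrt (3 * k / (4 * c * t)) * (r - R) + Real.sqrt (k * c * t))
            linarith
        have hexp : (0:ℝ) < Real.exp (-(Real.sqrt (3 * k)) * (r - R)) := Real.exp_pos _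
        show ‖incidentRadiation k c R bm bs t r - bm‖ ≤ _
        rw [incidentRadiation, diffusionProfile]
        rw [add_sub_cancel_left]
        rw [Real.norm_eq_abs]
        rw [abs_mul, abs_mul, abs_mul, abs_mul]
        have h1 : |R / r| = R / r := abs_of_nonneg hRr0
        have h2 : |(1:ℝ)/2| = 1/2 := by norm_num
        have h3 : |Real.exp (-(Real.sqrt (3 * k)) * (r - R))| =
            Real.exp (-(Real.sqrt (3 * k)) * (r - R)) := abs_of_pos hexp
        rw [h1, h2, h3]
        calc R / r * |bs - bm| * (1 / 2 * Real.exp (-(Real.sqrt (3 * k)) * (r - R)) * |_|)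
            ≤ 1 * |bs - bm| * (1 / 2 * Real.exp (-(Real.sqrt (3 * k)) * (r - R)) * 4) := by
              apply mul_le_mul
              · exact mul_le_mul_of_nonneg_right hRr (abs_nonneg _)
              · apply mul_le_mul_of_nonneg_left hE (by positivity)
              · positivity
              · positivity
          _ = |bs - bm| * 2 * Real.exp (-(Real.sqrt (3 * k)) * (r - R)) := by ring
      · have hsk : 0 < Real.sqrt (3 * k) := Real.sqrt_pos.mpr (by positivity)
        have hb : Tendsto (fun r : ℝ => -(Real.sqrt (3 * k)) * (r - R)) atTop atBot := by
          apply Tendsto.const_mul_atTop_of_neg (neg_neg_iff_pos.mpr hsk)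
          exact tendsto_atTop_add_const_right _ _ tendsto_id
        have := Real.tendsto_exp_atBot.comp hb
        have h := this.const_mul (|bs - bm| * 2)
        simpa using h
    have := key.add_const bm
    simp only [sub_add_cancel, zero_add] at this
    exact this
  · -- (iii) r = R
    intro t ht
    rw [incidentRadiation, diffusionProfile]
    simp only [sub_self, mul_zero, neg_zero, Real.exp_zero, zero_sub, zero_add,
      Erfc_add_neg, div_self (ne_of_gt hR)]
    ring
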